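/- arXiv:2209.05478 — 2 statements merged into one kernel-verified Lean document; each statement's English description precedes it below -/
import Mathlib

section
/- Let n₁ ≤ n₂ ≤ n₃ be integers with n₁ ≥ 2 and 1/n₁ + 1/n₂ + 1/n₃ < 1. Writing c_{2n} = cos(2π/(2n)) = cos(π/n), the inequality (c_{2n₁} + c_{2n₂})² + 2·c_{2n₃} ≥ 2 holds. -/
open Real

private lemma cos_pi_div_mono {m n : ℕ} (hm : 1 ≤ m) (hmn : m ≤ n) :
    Real.cos (π / m) ≤ Real.cos (π / n) := by
  have hm0 : (0:ℝ) < m := by exact_mod_cast hm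
  have hmn' : (m:ℝ) ≤ n := by exact_mod_cast hmn
  have hm1 : (1:ℝ) ≤ m := by exact_mod_cast hm
  apply Real.cos_le_cos_of_nonneg_of_le_pi
  · positivity
  · exact div_le_self Real.pi_pos.le hm1
  · exact div_le_div_of_nonneg_left Real.pi_pos.le hm0 hmn'

private lemma cos_pi_div_nonneg {n : ℕ} (hn : 2 ≤ n) : 0 ≤ Real.cos (π / n) := by
  have hn0 : (0:ℝ) < n := by positivity
  have hn2 : (2:ℝ) ≤ n := by exact_mod_cast hn
  apply Real.cos_nonneg_of_mem_Icc
  constructor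
  · have h0 : (0:ℝ) ≤ π / n := by positivity
    linarith [Real.pi_pos]
  · exact div_le_div_of_nonneg_left Real.pi_pos.le (by norm_num) hn2

private lemma cos_pi_div_five : (4:ℝ)/5 ≤ Real.cos (π / 5) := by
  have h := Real.one_sub_sq_div_two_le_cos (x := π / 5)
  have hπ := Real.pi_lt_d2
  have hπ0 := Real.pi_pos
  nlinarith

private lemma cos_pi_div_seven : (7:ℝ)/8 ≤ Real.cos (π / 7) := by
  have h := Real.one_sub_sq_div_two_le_cos (x := π / 7)
  have hπ := Real.pi_lt_d2
  have hπ0 := Real.pi_pos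
  nlinarith

set_option maxHeartbeats 1000000 in
theorem cos_inequality_hyperbolic_triangle (n₁ n₂ n₃ : ℕ)
    (h2 : 2 ≤ n₁) (h12 : n₁ ≤ n₂) (h23 : n₂ ≤ n₃)
    (hhyp : (1 : ℝ) / n₁ + 1 / n₂ + 1 / n₃ < 1) :
    (Real.cos (π / n₁) + Real.cos (π / n₂)) ^ 2 + 2 * Real.cos (π / n₃) ≥ 2 := by
  have hn1 : (0:ℝ) < n₁ := by positivity
  have hn2 : (0:ℝ) < n₂ := by have : 2 ≤ n₂ := le_trans h2 h12; positivity
  have hn3 : (0:ℝ) < n₃ := by have : 2 ≤ n₃ := le_trans (le_trans h2 h12) h23; positivity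
  have h2s : Real.sqrt 2 ^ 2 = 2 := Real.sq_sqrt (by norm_num)
  have hs0 : (0:ℝ) ≤ Real.sqrt 2 := Real.sqrt_nonneg 2
  have hcos4 : Real.cos (π / (4:ℕ)) = Real.sqrt 2 / 2 := by
    norm_num [Real.cos_pi_div_four]
  have hc4 : (7:ℝ)/10 ≤ Real.cos (π / (4:ℕ)) := by
    rw [hcos4]; nlinarith
  rcases lt_or_ge n₁ 4 with h4' | h4'
  swap
  · -- n₁ ≥ 4
    have hc1 : Real.sqrt 2 / 2 ≤ Real.cos (π / n₁) := by
      rw [← hcos4]; exact cos_pi_div_mono (by norm_num) h4'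
    have hc2 : Real.sqrt 2 / 2 ≤ Real.cos (π / n₂) := by
      rw [← hcos4]; exact cos_pi_div_mono (by norm_num) (le_trans h4' h12)
    have hc3 : (0:ℝ) ≤ Real.cos (π / n₃) :=
      cos_pi_div_nonneg (le_trans (le_trans h2 h12) h23)
    have hsum : Real.sqrt 2 ≤ Real.cos (π / n₁) + Real.cos (π / n₂) := by linarith
    nlinarith [hsum, h2s, hs0, hc3]
  interval_cases n₁
  · -- n₁ = 2
    have hc1 : Real.cos (π / (2:ℕ)) = 0 := by norm_num [Real.cos_pi_div_two]
    have hyp2 : (1:ℝ)/n₂ + 1/n₃ < 1/2 := by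
      have h' : (1:ℝ)/((2:ℕ):ℝ) = 1/2 := by norm_num
      linarith [hhyp, h']
    rcases lt_or_ge n₂ 5 with h5 | h5
    · interval_cases n₂
      · -- n₂ = 2: contradiction
        exfalso
        have h0 : (0:ℝ) < 1/n₃ := by positivity
        have h' : (1:ℝ)/((2:ℕ):ℝ) = 1/2 := by norm_num
        rw [h'] at hyp2
        linarith
      · -- n₂ = 3 : n₃ ≥ 7
        have h3r : (1:ℝ)/n₃ < 1/6 := by
          have h' : (1:ℝ)/((3:ℕ):ℝ) = 1/3 := by norm_num
          linarith [hyp2, h']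
        rw [div_lt_div_iff₀ hn3 (by norm_num : (0:ℝ) < 6)] at h3r
        have h7 : 7 ≤ n₃ := by
          have : (6:ℕ) < n₃ := by exact_mod_cast (by linarith : (6:ℝ) < n₃)
          omega
        have hc3 : (7:ℝ)/8 ≤ Real.cos (π / n₃) :=
          le_trans cos_pi_div_seven (cos_pi_div_mono (by norm_num) h7)
        have hc2 : Real.cos (π / (3:ℕ)) = 1/2 := by norm_num [Real.cos_pi_div_three]
        rw [hc1, hc2]
        nlinarith [hc3]
      · -- n₂ = 4 : n₃ ≥ 5
        have h4r : (1:ℝ)/n₃ < 1/4 := by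
          have h' : (1:ℝ)/((4:ℕ):ℝ) = 1/4 := by norm_num
          linarith [hyp2, h']
        rw [div_lt_div_iff₀ hn3 (by norm_num : (0:ℝ) < 4)] at h4r
        have h5' : 5 ≤ n₃ := by
          have : (4:ℕ) < n₃ := by exact_mod_cast (by linarith : (4:ℝ) < n₃)
          omega
        have hc3 : (4:ℝ)/5 ≤ Real.cos (π / n₃) :=
          le_trans cos_pi_div_five (cos_pi_div_mono (by norm_num) h5')
        rw [hc1, hcos4]
        nlinarith [hc3, h2s, hs0]
    · -- n₂ ≥ 5 hence n₃ ≥ 5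
      have hc2 : (4:ℝ)/5 ≤ Real.cos (π / n₂) :=
        le_trans cos_pi_div_five (cos_pi_div_mono (by norm_num) h5)
      have hc3 : (4:ℝ)/5 ≤ Real.cos (π / n₃) :=
        le_trans cos_pi_div_five (cos_pi_div_mono (by norm_num) (le_trans h5 h23))
      rw [hc1]
      nlinarith [hc2, hc3]
  · -- n₁ = 3
    have hc1 : Real.cos (π / (3:ℕ)) = 1/2 := by norm_num [Real.cos_pi_div_three]
    rcases lt_or_ge n₂ 4 with h4'' | h4''
    · -- n₂ = 3, need n₃ ≥ 4
      interval_cases n₂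
      have h3r : (1:ℝ)/n₃ < 1/3 := by
        have h' : (1:ℝ)/((3:ℕ):ℝ) = 1/3 := by norm_num
        linarith [hhyp, h']
      rw [div_lt_div_iff₀ hn3 (by norm_num : (0:ℝ) < 3)] at h3r
      have h4''' : 4 ≤ n₃ := by
        have : (3:ℕ) < n₃ := by exact_mod_cast (by linarith : (3:ℝ) < n₃)
        omega
      have hc3 : (7:ℝ)/10 ≤ Real.cos (π / n₃) :=
        le_trans hc4 (cos_pi_div_mono (by norm_num) h4''')
      rw [hc1]
      nlinarith [hc3]
    · -- n₂ ≥ 4, n₃ ≥ 4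
      have hc2 : (7:ℝ)/10 ≤ Real.cos (π / n₂) :=
        le_trans hc4 (cos_pi_div_mono (by norm_num) h4'')
      have hc3 : (7:ℝ)/10 ≤ Real.cos (π / n₃) :=
        le_trans hc4 (cos_pi_div_mono (by norm_num) (le_trans h4'' h23))
      rw [hc1]
      nlinarith [hc2, hc3]
end

section
/- Let m ≥ 3 be odd, let p be a prime divisor of m, and let F be a finite field of characteristic p containing a square root i of −1. Define ρ on the dihedral group T_{2,2,m} = ⟨x, y | x², y², (xy)^m⟩ by sending x to ±[[i,0],[0,−i]] and y to ±[[i,i],[0,−i]] in PSL(2,F). Then ρ is a well-defined group homomorphism whose image is non-abelian: ρ(x) and ρ(y) have order 2, ρ(xy) = ±[[1,1],[0,1]] has order p, and ρ(xy) ≠ ρ(yx). -/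
/-- The relations of the triangle group `T_{n₁,n₂,n₃}`. -/
def triangleRels (n₁ n₂ n₃ : ℕ) : Set (FreeGroup (Fin 2)) :=
  {(FreeGroup.of 0) ^ n₁, (FreeGroup.of 1) ^ n₂, (FreeGroup.of 0 * FreeGroup.of 1) ^ n₃}

/-- The triangle group `T_{n₁,n₂,n₃} = ⟨x, y ∣ x^{n₁}, y^{n₂}, (xy)^{n₃}⟩`. -/
def TriangleGroup (n₁ n₂ n₃ : ℕ) : Type := PresentedGroup (triangleRels n₁ n₂ n₃)

instance (n₁ n₂ n₃ : ℕ) : Group (TriangleGroup n₁ n₂ n₃) :=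
  inferInstanceAs (Group (PresentedGroup (triangleRels n₁ n₂ n₃)))

open Matrix
open scoped MatrixGroups

theorem dihedral_rep_into_PSL2 (m : ℕ) (hm : 3 ≤ m) (hmodd : Odd m)
    (p : ℕ) [Fact p.Prime] (hpm : p ∣ m)
    (F : Type*) [Field F] [Fintype F] [CharP F p]
    (i : F) (hi : i ^ 2 = -1)
    (X Y U : Matrix.SpecialLinearGroup (Fin 2) F)
    (hX : (X : Matrix (Fin 2) (Fin 2) F) = !![i, 0; 0, -i])
    (hY : (Y : Matrix (Fin 2) (Fin 2) F) = !![i, i; 0, -i])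
    (hU : (U : Matrix (Fin 2) (Fin 2) F) = !![1, 1; 0, 1]) :
    ∃ ρ : TriangleGroup 2 2 m →* PSL(2, F),
      ρ (PresentedGroup.of 0) = QuotientGroup.mk X ∧
      ρ (PresentedGroup.of 1) = QuotientGroup.mk Y ∧
      ρ (PresentedGroup.of 0 * PresentedGroup.of 1) = QuotientGroup.mk U ∧
      orderOf (ρ (PresentedGroup.of 0)) = 2 ∧
      orderOf (ρ (PresentedGroup.of 1)) = 2 ∧
      orderOf (ρ (PresentedGroup.of 0 * PresentedGroup.of 1)) = p ∧
      ρ (PresentedGroup.of 0 * PresentedGroup.of 1) ≠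
        ρ (PresentedGroup.of 1 * PresentedGroup.of 0) := by
  classical
  -- basic arithmetic facts
  have hp : p.Prime := Fact.out
  have hpodd : p ≠ 2 := by
    rintro rfl
    exact (Nat.not_even_iff_odd.mpr hmodd) (even_iff_two_dvd.mpr hpm)
  have h2F : (2 : F) ≠ 0 := by
    intro h
    have h2 := (CharP.cast_eq_zero_iff F p 2).mp (by exact_mod_cast h)
    exact hpodd ((Nat.prime_dvd_prime_iff_eq hp Nat.prime_two).mp h2)
  have hne : (-1 : F) ≠ 1 := by
    intro h
    apply h2F
    linear_combination -h
  have hi0 : i ≠ 0 := by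
    intro h
    rw [h] at hi
    simpa using hi.symm
  have hmF : (m : F) = 0 := (CharP.cast_eq_zero_iff F p m).mpr hpm
  have hpF : (p : F) = 0 := CharP.cast_eq_zero F p
  -- the central element -1 in SL(2,F)
  set Z : Matrix.SpecialLinearGroup (Fin 2) F :=
    ⟨-1, by simp [Matrix.det_neg]⟩ with hZ
  have hZc : Z ∈ Subgroup.center (Matrix.SpecialLinearGroup (Fin 2) F) := by
    rw [Matrix.SpecialLinearGroup.mem_center_iff]
    refine ⟨-1, by norm_num, ?_⟩
    simp only [hZ, Matrix.scalar_apply]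
    ext i j
    fin_cases i <;> fin_cases j <;> simp
  have hZ2 : Z * Z = 1 := by
    apply Subtype.ext
    rw [Matrix.SpecialLinearGroup.coe_mul]
    ext i j
    simp [hZ, Matrix.SpecialLinearGroup.coe_mul]
  -- auxiliary matrix computations
  have hUpow : ∀ n : ℕ, ((U ^ n : Matrix.SpecialLinearGroup (Fin 2) F) :
      Matrix (Fin 2) (Fin 2) F) = !![1, (n : F); 0, 1] := by
    intro n
    induction n with
    | zero => ext i j; fin_cases i <;> fin_cases j <;> simp
    | succ n ih =>
        rw [pow_succ, Matrix.SpecialLinearGroup.coe_mul, ih, hU]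
        ext i j
        fin_cases i <;> fin_cases j <;>
          simp [Matrix.mul_apply, Fin.sum_univ_two] <;> ring
  have hXY : X * Y = Z * U := by
    apply Subtype.ext
    rw [Matrix.SpecialLinearGroup.coe_mul, Matrix.SpecialLinearGroup.coe_mul]
    ext i j
    fin_cases i <;> fin_cases j <;>
      simp [hZ, hX, hY, hU, Matrix.SpecialLinearGroup.coe_mul, Matrix.mul_apply,
        Fin.sum_univ_two] <;>
      (first | ring1 | linear_combination hi | linear_combination -hi | linear_combination (2:F) * hi | linear_combination (-2:F) * hi)
  set V : Matrix.SpecialLinearGroup (Fin 2) F :=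
    ⟨!![1, -1; 0, 1], by simp⟩ with hV
  have hYX : Y * X = Z * V := by
    apply Subtype.ext
    rw [Matrix.SpecialLinearGroup.coe_mul, Matrix.SpecialLinearGroup.coe_mul]
    ext i j
    fin_cases i <;> fin_cases j <;>
      simp [hZ, hV, hX, hY, Matrix.SpecialLinearGroup.coe_mul, Matrix.mul_apply,
        Fin.sum_univ_two] <;>
      (first | ring1 | linear_combination hi | linear_combination -hi | linear_combination (2:F) * hi | linear_combination (-2:F) * hi)
  have hX2 : X * X = Z := by
    ext i j
    fin_cases i <;> fin_cases j <;>
      simp [hZ, hX, Matrix.SpecialLinearGroup.coe_mul, Matrix.mul_apply,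
        Fin.sum_univ_two] <;>
      (first | ring1 | linear_combination hi | linear_combination -hi | linear_combination (2:F) * hi | linear_combination (-2:F) * hi)
  have hY2 : Y * Y = Z := by
    ext i j
    fin_cases i <;> fin_cases j <;>
      simp [hZ, hY, Matrix.SpecialLinearGroup.coe_mul, Matrix.mul_apply,
        Fin.sum_univ_two] <;>
      (first | ring1 | linear_combination hi | linear_combination -hi | linear_combination (2:F) * hi | linear_combination (-2:F) * hi)
  have hUm : U ^ m = 1 := by
    ext i j
    rw [hUpow m, hmF]
    fin_cases i <;> fin_cases j <;> simp
  have hUp : U ^ p = 1 := by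
    ext i j
    rw [hUpow p, hpF]
    fin_cases i <;> fin_cases j <;> simp
  have hZcomm : ∀ g : Matrix.SpecialLinearGroup (Fin 2) F, Commute Z g := fun g =>
    (Subgroup.mem_center_iff.mp hZc g).symm
  have hZm : Z ^ m = Z := by
    obtain ⟨k, hk⟩ := hmodd
    subst hk
    rw [pow_add, pow_mul, pow_two, hZ2, one_pow, one_mul, pow_one]
  have hXYm : (X * Y) ^ m = Z := by
    rw [hXY, (hZcomm U).mul_pow, hZm, hUm, mul_one]
  -- the quotient map
  set q : Matrix.SpecialLinearGroup (Fin 2) F →* PSL(2, F) :=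
    QuotientGroup.mk' _ with hq
  have hq1 : ∀ A : Matrix.SpecialLinearGroup (Fin 2) F, q A = QuotientGroup.mk A := fun _ => rfl
  have hZ1 : q Z = 1 := (QuotientGroup.eq_one_iff Z).mpr hZc
  -- the representation
  set f : Fin 2 → PSL(2, F) := ![q X, q Y] with hf
  have hrels : ∀ r ∈ triangleRels 2 2 m, FreeGroup.lift f r = 1 := by
    rintro r (rfl | rfl | rfl)
    · rw [_root_.map_pow, FreeGroup.lift_apply_of]
      show (q X) ^ 2 = 1
      rw [pow_two, ← _root_.map_mul, hX2, hZ1]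
    · rw [_root_.map_pow, FreeGroup.lift_apply_of]
      show (q Y) ^ 2 = 1
      rw [pow_two, ← _root_.map_mul, hY2, hZ1]
    · rw [_root_.map_pow, _root_.map_mul, FreeGroup.lift_apply_of, FreeGroup.lift_apply_of]
      show (q X * q Y) ^ m = 1
      rw [← _root_.map_mul, ← _root_.map_pow, hXYm, hZ1]
  -- non-centrality facts
  have entry_ne : ∀ A : Matrix.SpecialLinearGroup (Fin 2) F,
      q A = 1 → ∃ r : F, Matrix.scalar (Fin 2) r = (A : Matrix (Fin 2) (Fin 2) F) := by
    intro A hA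
    obtain ⟨r, -, hs⟩ :=
      Matrix.SpecialLinearGroup.mem_center_iff.mp ((QuotientGroup.eq_one_iff A).mp hA)
    exact ⟨r, hs⟩
  have hqX1 : q X ≠ 1 := by
    intro h
    obtain ⟨r, hs⟩ := entry_ne X h
    rw [hX] at hs
    have h00 : (Matrix.scalar (Fin 2) r) 0 0 = (!![i, 0; 0, -i] : Matrix (Fin 2) (Fin 2) F) 0 0 :=
      by rw [hs]
    have h11 : (Matrix.scalar (Fin 2) r) 1 1 = (!![i, 0; 0, -i] : Matrix (Fin 2) (Fin 2) F) 1 1 :=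
      by rw [hs]
    simp [Matrix.scalar_apply] at h00 h11
    apply hi0
    have h2i : (2 : F) * i = 0 := by linear_combination h11 - h00
    rcases mul_eq_zero.mp h2i with h | h
    · exact absurd h h2F
    · exact h
  have hqY1 : q Y ≠ 1 := by
    intro h
    obtain ⟨r, hs⟩ := entry_ne Y h
    rw [hY] at hs
    have h01 : (Matrix.scalar (Fin 2) r) 0 1 = (!![i, i; 0, -i] : Matrix (Fin 2) (Fin 2) F) 0 1 :=
      by rw [hs]
    simp [Matrix.scalar_apply] at h01
    exact hi0 h01.symm
  have hqU1 : q U ≠ 1 := by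
    intro h
    obtain ⟨r, hs⟩ := entry_ne U h
    rw [hU] at hs
    have h01 : (Matrix.scalar (Fin 2) r) 0 1 = (!![1, 1; 0, 1] : Matrix (Fin 2) (Fin 2) F) 0 1 :=
      by rw [hs]
    simp [Matrix.scalar_apply] at h01
  have hUV : q U ≠ q V := by
    intro h
    obtain ⟨z, hz, hz2⟩ := (QuotientGroup.mk'_eq_mk' (N := Subgroup.center (Matrix.SpecialLinearGroup (Fin 2) F))).mp h
    obtain ⟨r, -, hs⟩ := Matrix.SpecialLinearGroup.mem_center_iff.mp hz
    have hm2 : (U : Matrix (Fin 2) (Fin 2) F) * (z : Matrix (Fin 2) (Fin 2) F)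
        = (V : Matrix (Fin 2) (Fin 2) F) := by
      rw [← Matrix.SpecialLinearGroup.coe_mul, hz2]
    rw [← hs, hU, hV] at hm2
    have h00 : ((!![1, 1; 0, 1] : Matrix (Fin 2) (Fin 2) F) * Matrix.scalar (Fin 2) r) 0 0
        = (!![1, -1; 0, 1] : Matrix (Fin 2) (Fin 2) F) 0 0 := by rw [hm2]
    have h01 : ((!![1, 1; 0, 1] : Matrix (Fin 2) (Fin 2) F) * Matrix.scalar (Fin 2) r) 0 1
        = (!![1, -1; 0, 1] : Matrix (Fin 2) (Fin 2) F) 0 1 := by rw [hm2]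
    simp [Matrix.scalar_apply, Matrix.mul_apply, Fin.sum_univ_two] at h00 h01
    apply hne
    rw [← h01, h00]
  set ρ := PresentedGroup.toGroup hrels with hρ
  have e0 : ρ (PresentedGroup.of 0) = q X := PresentedGroup.toGroup.of hrels
  have e1 : ρ (PresentedGroup.of 1) = q Y := PresentedGroup.toGroup.of hrels
  have e01 : ρ (PresentedGroup.of 0 * PresentedGroup.of 1) = q U := by
    rw [_root_.map_mul, e0, e1, ← _root_.map_mul, hXY, _root_.map_mul, hZ1, one_mul]
  have e10 : ρ (PresentedGroup.of 1 * PresentedGroup.of 0) = q V := by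
    rw [_root_.map_mul, e1, e0, ← _root_.map_mul, hYX, _root_.map_mul, hZ1, one_mul]
  have o0 : orderOf (ρ (PresentedGroup.of 0)) = 2 := by
    rw [e0]
    exact orderOf_eq_prime (by rw [pow_two, ← _root_.map_mul, hX2, hZ1]) hqX1
  have o1 : orderOf (ρ (PresentedGroup.of 1)) = 2 := by
    rw [e1]
    exact orderOf_eq_prime (by rw [pow_two, ← _root_.map_mul, hY2, hZ1]) hqY1
  have o01 : orderOf (ρ (PresentedGroup.of 0 * PresentedGroup.of 1)) = p := by
    rw [e01]
    exact orderOf_eq_prime (by rw [← _root_.map_pow, hUp, _root_.map_one]) hqU1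
  have hne' : ρ (PresentedGroup.of 0 * PresentedGroup.of 1) ≠
      ρ (PresentedGroup.of 1 * PresentedGroup.of 0) := by
    rw [e01, e10]
    exact hUV
  exact ⟨ρ, e0, e1, e01, o0, o1, o01, hne'⟩
end
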